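/- arXiv:1703.01660 — 2 statements merged into one kernel-verified Lean document; each statement's English description precedes it below -/
import Mathlib

section
/- The number of connected components of the complement of an arrangement of m lines in general position in the real projective plane equals binom(m,2) + 1. -/
open Projectivization

/-- The real projective plane as the projectivization of `ℝ³`. -/
abbrev RP2 := Projectivization ℝ (Fin 3 → ℝ)

/-- The quotient topology on the real projective plane, inherited from `ℝ³ \ {0}`. -/
noncomputable instance : TopologicalSpace RP2 :=
  instTopologicalSpaceQuotient (s := projectivizationSetoid ℝ (Fin 3 → ℝ))

/-- The projective line in `RP²` cut out by a nonzero linear form `v`,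
i.e. all points whose (every) representative is orthogonal to `v`. -/
def projLine (v : Fin 3 → ℝ) : Set RP2 :=
  {p : RP2 | ∑ k, v k * p.rep k = 0}

open Finset Topology

attribute [local instance 10] Classical.propDecidable

set_option linter.unusedTactic false
set_option linter.unreachableTactic false
set_option linter.unusedVariables false
set_option linter.unnecessarySeqFocus false
set_option maxHeartbeats 1000000

namespace Arr




def dd {N : ℕ} (v x : Fin N → ℝ) : ℝ := ∑ k, v k * x k

variable {N k : ℕ}

lemma dd_add (v x y : Fin N → ℝ) : dd v (x + y) = dd v x + dd v y := by
  simp [dd, mul_add, Finset.sum_add_distrib]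

lemma dd_smul (v : Fin N → ℝ) (c : ℝ) (x : Fin N → ℝ) : dd v (c • x) = c * dd v x := by
  simp only [dd, Pi.smul_apply, smul_eq_mul, Finset.mul_sum]
  exact Finset.sum_congr rfl fun _ _ => by ring

lemma dd_neg (v x : Fin N → ℝ) : dd v (-x) = - dd v x := by
  simpa using dd_smul v (-1) x

lemma dd_zero (v : Fin N → ℝ) : dd v 0 = 0 := by simp [dd]

lemma dd_smul_left (v : Fin N → ℝ) (c : ℝ) (x : Fin N → ℝ) : dd (c • v) x = c * dd v x := by
  simp only [dd, Pi.smul_apply, smul_eq_mul, Finset.mul_sum]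
  exact Finset.sum_congr rfl fun _ _ => by ring

lemma dd_comm (v x : Fin N → ℝ) : dd v x = dd x v := by
  exact Finset.sum_congr rfl fun _ _ => by ring

lemma dd_sub_left (u w x : Fin N → ℝ) : dd (u - w) x = dd u x - dd w x := by
  simp [dd, sub_mul, Finset.sum_sub_distrib]

lemma dd_sub (v x y : Fin N → ℝ) : dd v (x - y) = dd v x - dd v y := by
  simp [dd, mul_sub, Finset.sum_sub_distrib]

lemma dd_self_pos {v : Fin N → ℝ} (hv : v ≠ 0) : 0 < dd v v := by
  obtain ⟨j, hj⟩ := Function.ne_iff.1 hv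
  refine Finset.sum_pos' (fun i _ => mul_self_nonneg _) ⟨j, Finset.mem_univ _, ?_⟩
  exact mul_self_pos.2 hj

lemma dd_cont (v : Fin N → ℝ) : Continuous (dd v) := by
  unfold dd
  exact continuous_finset_sum _ fun i _ => (continuous_const.mul (continuous_apply i))

lemma dd_islin (v : Fin N → ℝ) : IsLinearMap ℝ (dd v) :=
  ⟨fun x y => dd_add v x y, fun c x => by simpa using dd_smul v c x⟩

def Ok (w : Fin k → Fin N → ℝ) (x : Fin N → ℝ) : Prop := ∀ i, dd (w i) x ≠ 0

def Mem (w : Fin k → Fin N → ℝ) (ε : Fin k → Bool) (x : Fin N → ℝ) : Prop :=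
  ∀ i, if ε i = true then 0 < dd (w i) x else dd (w i) x < 0

def Realz (w : Fin k → Fin N → ℝ) (ε : Fin k → Bool) : Prop := ∃ x, Mem w ε x

noncomputable def patt (w : Fin k → Fin N → ℝ) (x : Fin N → ℝ) : Fin k → Bool :=
  fun i => decide (0 < dd (w i) x)

def nneg (ε : Fin k → Bool) : Fin k → Bool := fun i => !(ε i)

lemma nneg_nneg (ε : Fin k → Bool) : nneg (nneg ε) = ε := by
  funext i; simp [nneg]

lemma mem_ok {w : Fin k → Fin N → ℝ} {ε x} (h : Mem w ε x) : Ok w x := by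
  intro i
  have := h i
  by_cases hi : ε i = true <;> simp [hi] at this <;> [exact ne_of_gt this; exact ne_of_lt this]

lemma mem_unique {w : Fin k → Fin N → ℝ} {ε x} (h : Mem w ε x) : patt w x = ε := by
  funext i
  have := h i
  by_cases hi : ε i = true <;> simp [hi] at this <;>
    simp [patt, hi, this, not_lt_of_gt, le_of_lt]

lemma mem_patt {w : Fin k → Fin N → ℝ} {x} (h : Ok w x) : Mem w (patt w x) x := by
  intro i
  rcases lt_trichotomy 0 (dd (w i) x) with h1 | h1 | h1
  · simp [patt, h1]
  · exact absurd h1.symm (h i)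
  · simp [patt, not_lt_of_gt h1, h1]

lemma mem_neg {w : Fin k → Fin N → ℝ} {ε x} (h : Mem w ε x) : Mem w (nneg ε) (-x) := by
  intro i
  have := h i
  rw [dd_neg]
  by_cases hi : ε i = true <;> simp [hi, nneg] at this ⊢ <;> linarith

lemma mem_smul {w : Fin k → Fin N → ℝ} {ε x} (h : Mem w ε x) {c : ℝ} (hc : 0 < c) :
    Mem w ε (c • x) := by
  intro i
  have := h i
  rw [dd_smul]
  by_cases hi : ε i = true <;> simp [hi] at this ⊢
  · exact mul_pos hc this
  · exact mul_neg_of_pos_of_neg hc this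

lemma mem_nonzero {w : Fin k → Fin N → ℝ} {ε x} (h : Mem w ε x) (i : Fin k) : x ≠ 0 := by
  rintro rfl
  exact mem_ok h i (dd_zero _)

variable {N k : ℕ}

/-- perturbation off the hyperplane dd g · = 0 preserving a sign pattern -/
lemma perturb {w : Fin k → Fin N → ℝ} {ε : Fin k → Bool} {x g : Fin N → ℝ}
    (h : Mem w ε x) (hg : g ≠ 0) (hxg : dd g x = 0) (b : Bool) :
    ∃ z, Mem w ε z ∧ (if b = true then 0 < dd g z else dd g z < 0) := by
  set S : Set ℝ := ⋂ i, {t : ℝ | if ε i = true then 0 < dd (w i) (x + t • g)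
      else dd (w i) (x + t • g) < 0} with hS
  have hCont : ∀ i : Fin k, Continuous fun t : ℝ => dd (w i) (x + t • g) := by
    intro i
    have : (fun t : ℝ => dd (w i) (x + t • g)) = fun t => dd (w i) x + t * dd (w i) g := by
      funext t; rw [dd_add, dd_smul]
    rw [this]
    exact continuous_const.add (continuous_id.mul continuous_const)
  have hSopen : IsOpen S := by
    refine isOpen_iInter_of_finite fun i => ?_
    by_cases hi : ε i = true
    · simpa [hi] using isOpen_lt continuous_const (hCont i)
    · simpa [hi] using isOpen_lt (hCont i) continuous_const
  have h0 : (0 : ℝ) ∈ S := by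
    simp only [hS, Set.mem_iInter, Set.mem_setOf_eq]
    intro i
    simpa using h i
  obtain ⟨r, hr, hball⟩ := Metric.isOpen_iff.1 hSopen 0 h0
  set t : ℝ := if b = true then r / 2 else -(r / 2) with ht
  have htS : t ∈ S := by
    apply hball
    simp only [Metric.mem_ball, Real.dist_eq, sub_zero, ht]
    by_cases hb : b = true <;> simp [hb, abs_of_pos, abs_of_neg, hr] <;> linarith
  refine ⟨x + t • g, ?_, ?_⟩
  · intro i
    have := Set.mem_iInter.1 htS i
    exact this
  · have : dd g (x + t • g) = t * dd g g := by rw [dd_add, dd_smul, hxg, zero_add]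
    rw [this]
    have hgg : 0 < dd g g := dd_self_pos hg
    by_cases hb : b = true <;> simp [hb, ht] at *
    · positivity
    · nlinarith

/-- crossing the hyperplane inside a chamber (convexity + IVT) -/
lemma crossing {w : Fin k → Fin N → ℝ} {ε : Fin k → Bool} {x y g : Fin N → ℝ}
    (hx : Mem w ε x) (hy : Mem w ε y) (hgx : dd g x < 0) (hgy : 0 < dd g y) :
    ∃ z, Mem w ε z ∧ dd g z = 0 := by
  have hcont : Continuous fun t : ℝ => dd g (x + t • (y - x)) := by
    have : (fun t : ℝ => dd g (x + t • (y - x))) = fun t => dd g x + t * dd g (y - x) := by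
      funext t; rw [dd_add, dd_smul]
    rw [this]; exact continuous_const.add (continuous_id.mul continuous_const)
  have h0 : dd g (x + (0:ℝ) • (y - x)) = dd g x := by simp
  have h1 : dd g (x + (1:ℝ) • (y - x)) = dd g y := by simp
  have ivt := intermediate_value_Icc (by norm_num : (0:ℝ) ≤ 1) hcont.continuousOn
  have hmem : (0:ℝ) ∈ Set.Icc (dd g (x + (0:ℝ) • (y - x))) (dd g (x + (1:ℝ) • (y - x))) := by
    rw [h0, h1]; exact ⟨le_of_lt hgx, le_of_lt hgy⟩
  obtain ⟨t, ht, htz⟩ := ivt hmem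
  refine ⟨x + t • (y - x), ?_, htz⟩
  intro i
  have hxi := hx i
  have hyi := hy i
  have hexp : dd (w i) (x + t • (y - x)) = (1 - t) * dd (w i) x + t * dd (w i) y := by
    rw [dd_add, dd_smul, dd_sub]; ring
  obtain ⟨ht0, ht1⟩ := ht
  by_cases hi : ε i = true
  · simp only [hi, if_true] at hxi hyi ⊢
    rw [hexp]
    rcases eq_or_lt_of_le ht0 with h' | h'
    · subst h'; simpa using hxi
    · nlinarith [mul_pos h' hyi, mul_nonneg (by linarith : (0:ℝ) ≤ 1 - t) hxi.le]
  · simp [hi] at hxi hyi ⊢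
    rw [hexp]
    rcases eq_or_lt_of_le ht0 with h' | h'
    · subst h'; simpa using hxi
    · nlinarith [mul_neg_of_pos_of_neg h' hyi,
        mul_nonpos_of_nonneg_of_nonpos (by linarith : (0:ℝ) ≤ 1 - t) hxi.le]

lemma mem_restrict {w : Fin (k+1) → Fin N → ℝ} {ε : Fin (k+1) → Bool} {x}
    (h : Mem w ε x) : Mem (w ∘ Fin.castSucc) (ε ∘ Fin.castSucc) x := fun i => h _

lemma mem_snoc {w : Fin (k+1) → Fin N → ℝ} {δ : Fin k → Bool} {x} {b : Bool}
    (h : Mem (w ∘ Fin.castSucc) δ x)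
    (hb : if b = true then 0 < dd (w (Fin.last k)) x else dd (w (Fin.last k)) x < 0) :
    Mem w (Fin.snoc δ b) x := by
  intro i
  induction i using Fin.lastCases with
  | last => simpa [Fin.snoc_last] using hb
  | cast j => simpa [Fin.snoc_castSucc] using h j

lemma snoc_eta (ε : Fin (k+1) → Bool) :
    Fin.snoc (ε ∘ Fin.castSucc) (ε (Fin.last k)) = ε := by
  funext i
  induction i using Fin.lastCases with
  | last => simp [Fin.snoc_last]
  | cast j => simp [Fin.snoc_castSucc]

def Kdeg (w : Fin (k+1) → Fin N → ℝ) (δ : Fin k → Bool) : Prop :=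
  ∃ z, Mem (w ∘ Fin.castSucc) δ z ∧ dd (w (Fin.last k)) z = 0

lemma restrict_snoc (δ : Fin k → Bool) (b : Bool) :
    (Fin.snoc δ b : Fin (k+1) → Bool) ∘ Fin.castSucc = δ := by
  funext i; simp [Fin.snoc_castSucc]

lemma realz_snoc_or {w : Fin (k+1) → Fin N → ℝ} {δ : Fin k → Bool}
    (hlast : w (Fin.last k) ≠ 0) (h : Realz (w ∘ Fin.castSucc) δ) :
    Realz w (Fin.snoc δ true) ∨ Realz w (Fin.snoc δ false) := by
  obtain ⟨x, hx⟩ := h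
  rcases lt_trichotomy 0 (dd (w (Fin.last k)) x) with h1 | h1 | h1
  · left; exact ⟨x, mem_snoc hx (by simpa using h1)⟩
  · obtain ⟨z, hz, hz2⟩ := perturb hx hlast h1.symm true
    left; exact ⟨z, mem_snoc hz (by simpa using hz2)⟩
  · right; exact ⟨x, mem_snoc hx (by simpa using h1)⟩

lemma kdeg_of_both {w : Fin (k+1) → Fin N → ℝ} {δ : Fin k → Bool}
    (h1 : Realz w (Fin.snoc δ true)) (h2 : Realz w (Fin.snoc δ false)) : Kdeg w δ := by
  obtain ⟨y, hy⟩ := h1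
  obtain ⟨x, hx⟩ := h2
  have hy' : Mem (w ∘ Fin.castSucc) δ y := by
    have := mem_restrict hy
    rwa [restrict_snoc] at this
  have hx' : Mem (w ∘ Fin.castSucc) δ x := by
    have := mem_restrict hx
    rwa [restrict_snoc] at this
  have hgy : 0 < dd (w (Fin.last k)) y := by simpa [Fin.snoc_last] using hy (Fin.last k)
  have hgx : dd (w (Fin.last k)) x < 0 := by simpa [Fin.snoc_last] using hx (Fin.last k)
  obtain ⟨z, hz, hz0⟩ := crossing hx' hy' hgx hgy
  exact ⟨z, hz, hz0⟩

lemma both_of_kdeg {w : Fin (k+1) → Fin N → ℝ} {δ : Fin k → Bool}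
    (hlast : w (Fin.last k) ≠ 0) (h : Kdeg w δ) :
    Realz w (Fin.snoc δ true) ∧ Realz w (Fin.snoc δ false) := by
  obtain ⟨z, hz, hz0⟩ := h
  constructor
  · obtain ⟨z', hz', hs⟩ := perturb hz hlast hz0 true
    exact ⟨z', mem_snoc hz' (by simpa using hs)⟩
  · obtain ⟨z', hz', hs⟩ := perturb hz hlast hz0 false
    exact ⟨z', mem_snoc hz' (by simpa using hs)⟩

lemma snoc_true_ne_snoc_false (δ : Fin k → Bool) :
    (Fin.snoc δ true : Fin (k+1) → Bool) ≠ Fin.snoc δ false := by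
  intro h
  have := congrFun h (Fin.last k)
  simp [Fin.snoc_last] at this

lemma step_count (w : Fin (k+1) → Fin N → ℝ) (hlast : w (Fin.last k) ≠ 0) :
    (univ.filter (Realz w)).card =
      (univ.filter (Realz (w ∘ Fin.castSucc))).card +
        ((univ.filter (Realz (w ∘ Fin.castSucc))).filter (Kdeg w)).card := by
  classical
  set A := univ.filter (Realz w) with hA
  set B := univ.filter (Realz (w ∘ Fin.castSucc)) with hB
  have hmapsto : ∀ ε ∈ A, (ε ∘ Fin.castSucc) ∈ B := by
    intro ε hε
    simp only [hA, Finset.mem_filter, Finset.mem_univ, true_and] at hε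
    simp only [hB, Finset.mem_filter, Finset.mem_univ, true_and]
    obtain ⟨x, hx⟩ := hε
    exact ⟨x, mem_restrict hx⟩
  rw [Finset.card_eq_sum_card_fiberwise hmapsto]
  have hfib : ∀ δ ∈ B, (A.filter fun ε => ε ∘ Fin.castSucc = δ).card
      = if Kdeg w δ then 2 else 1 := by
    intro δ hδ
    have hδr : Realz (w ∘ Fin.castSucc) δ := by
      simpa [hB, Finset.mem_filter] using hδ
    have hAf : (A.filter fun ε => ε ∘ Fin.castSucc = δ)
        = ({Fin.snoc δ true, Fin.snoc δ false} : Finset _).filter (Realz w) := by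
      ext ε
      simp only [Finset.mem_filter, hA, Finset.mem_univ, true_and, Finset.mem_insert,
        Finset.mem_singleton]
      constructor
      · rintro ⟨h1, rfl⟩
        refine ⟨?_, h1⟩
        have heta := snoc_eta ε
        rcases Bool.eq_false_or_eq_true (ε (Fin.last k)) with hb | hb
        · left; rw [hb] at heta; exact heta.symm
        · right; rw [hb] at heta; exact heta.symm
      · rintro ⟨h1, h2⟩
        refine ⟨h2, ?_⟩
        rcases h1 with rfl | rfl <;> exact restrict_snoc δ _
    rw [hAf]
    by_cases hK : Kdeg w δ
    · obtain ⟨hT, hF⟩ := both_of_kdeg hlast hK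
      rw [if_pos hK, Finset.filter_insert, if_pos hT, Finset.filter_singleton, if_pos hF]
      rw [Finset.card_insert_of_notMem (by simp [snoc_true_ne_snoc_false δ])]
      simp
    · rw [if_neg hK]
      have hor := realz_snoc_or hlast hδr
      by_cases hT : Realz w (Fin.snoc δ true)
      · have hF : ¬ Realz w (Fin.snoc δ false) := fun hF => hK (kdeg_of_both hT hF)
        rw [Finset.filter_insert, if_pos hT, Finset.filter_singleton, if_neg hF]
        simp
      · have hF : Realz w (Fin.snoc δ false) := hor.resolve_left hT
        rw [Finset.filter_insert, if_neg hT, Finset.filter_singleton, if_pos hF]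
        simp
  rw [Finset.sum_congr rfl hfib]
  have : ∀ δ ∈ B, (if Kdeg w δ then 2 else 1) = 1 + (if Kdeg w δ then 1 else 0) := by
    intro δ _; by_cases h : Kdeg w δ <;> simp [h]
  rw [Finset.sum_congr rfl this, Finset.sum_add_distrib, Finset.sum_const, smul_eq_mul, mul_one]
  congr 1
  rw [hB, Finset.filter_filter, Finset.card_filter, Finset.sum_filter]
  refine Finset.sum_congr rfl fun a _ => ?_
  by_cases h1 : Realz (w ∘ Fin.castSucc) a <;> by_cases h2 : Kdeg w a <;> simp [h1, h2]
lemma count_one (w : Fin 1 → Fin N → ℝ) (hw : ∀ i, w i ≠ 0) :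
    (univ.filter (Realz w)).card = 2 := by
  have hall : ∀ ε : Fin 1 → Bool, Realz w ε := by
    intro ε
    refine ⟨if ε 0 = true then w 0 else -(w 0), ?_⟩
    intro i
    have hi : i = 0 := Subsingleton.elim i 0
    subst hi
    by_cases h : ε 0 = true <;> simp [h, dd_neg, dd_self_pos (hw 0)]
  rw [Finset.filter_true_of_mem (fun ε _ => hall ε)]
  simp

def rot (g : Fin 2 → ℝ) : Fin 2 → ℝ := ![-(g 1), g 0]

lemma dd_rot (g : Fin 2 → ℝ) : dd g (rot g) = 0 := by
  simp [dd, rot, Fin.sum_univ_two]; ring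

lemma two_nonzero {g : Fin 2 → ℝ} (hg : g ≠ 0) : g 0 ≠ 0 ∨ g 1 ≠ 0 := by
  by_contra h
  push_neg at h
  exact hg (by funext i; fin_cases i <;> simp [h.1, h.2])

lemma ortho_rot {g z : Fin 2 → ℝ} (hg : g ≠ 0) (h : dd g z = 0) : ∃ c : ℝ, z = c • rot g := by
  have hdd : g 0 * z 0 + g 1 * z 1 = 0 := by simpa [dd, Fin.sum_univ_two] using h
  rcases two_nonzero hg with h0 | h1
  · refine ⟨z 1 / g 0, ?_⟩
    funext i
    fin_cases i <;> simp [rot] <;> field_simp <;> nlinarith [hdd]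
  · refine ⟨-(z 0) / g 1, ?_⟩
    funext i
    fin_cases i <;> simp [rot] <;> field_simp <;> nlinarith [hdd]

lemma prop_of_dd_rot {g u : Fin 2 → ℝ} (hg : g ≠ 0) (h : dd u (rot g) = 0) :
    ∃ c : ℝ, u = c • g := by
  have hdd : u 0 * (-(g 1)) + u 1 * g 0 = 0 := by simpa [dd, rot, Fin.sum_univ_two] using h
  rcases two_nonzero hg with h0 | h1
  · refine ⟨u 0 / g 0, ?_⟩
    funext i
    fin_cases i <;> simp <;> field_simp <;> nlinarith [hdd]
  · refine ⟨u 1 / g 1, ?_⟩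
    funext i
    fin_cases i <;> simp <;> field_simp <;> nlinarith [hdd]

lemma patt_neg_ne {w : Fin (k+1) → Fin N → ℝ} {x : Fin N → ℝ} (h : Ok w x) :
    patt w x ≠ patt w (-x) := by
  intro hEq
  have := congrFun hEq 0
  rw [show patt w (-x) 0 = decide (0 < dd (w 0) (-x)) from rfl, dd_neg] at this
  rcases lt_trichotomy 0 (dd (w 0) x) with h1 | h1 | h1
  · rw [show patt w x 0 = decide (0 < dd (w 0) x) from rfl] at this
    simp [h1, not_lt_of_gt, le_of_lt] at this
  · exact h 0 h1.symm
  · rw [show patt w x 0 = decide (0 < dd (w 0) x) from rfl] at this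
    simp [not_lt_of_gt h1, h1] at this

lemma count2 : ∀ (k : ℕ) (w : Fin (k+1) → Fin 2 → ℝ), (∀ i, w i ≠ 0) →
    (∀ i j, i ≠ j → ∀ c : ℝ, w i ≠ c • w j) →
    (univ.filter (Realz w)).card = 2 * (k+1) := by
  intro k
  induction k with
  | zero => intro w hw _; rw [count_one w hw]
  | succ k ih =>
    intro w hw hprop
    have hlast : w (Fin.last (k+1)) ≠ 0 := hw _
    rw [step_count w hlast]
    have hw' : ∀ i, (w ∘ Fin.castSucc) i ≠ 0 := fun i => hw _
    have hprop' : ∀ i j, i ≠ j → ∀ c : ℝ, (w ∘ Fin.castSucc) i ≠ c • (w ∘ Fin.castSucc) j :=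
      fun i j hij c => hprop _ _ (fun h => hij (Fin.castSucc_injective _ h)) c
    rw [ih (w ∘ Fin.castSucc) hw' hprop']
    have hOkrot : Ok (w ∘ Fin.castSucc) (rot (w (Fin.last (k+1)))) := by
      intro i
      intro hzero
      obtain ⟨c, hc⟩ := prop_of_dd_rot hlast hzero
      exact hprop (Fin.castSucc i) (Fin.last (k+1)) (Fin.ne_last_of_lt (Fin.castSucc_lt_last i)) c hc
    have hOkrotneg : Ok (w ∘ Fin.castSucc) (-(rot (w (Fin.last (k+1))))) := by
      intro i
      rw [dd_neg]
      exact neg_ne_zero.2 (hOkrot i)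
    set g := w (Fin.last (k+1)) with hg
    set x₀ := rot g with hx₀
    have hKd : (univ.filter (Realz (w ∘ Fin.castSucc))).filter (Kdeg w)
        = ({patt (w ∘ Fin.castSucc) x₀, patt (w ∘ Fin.castSucc) (-x₀)} : Finset _) := by
      ext δ
      simp only [Finset.mem_filter, Finset.mem_univ, true_and, Finset.mem_insert,
        Finset.mem_singleton]
      constructor
      · rintro ⟨-, z, hz, hz0⟩
        obtain ⟨c, rfl⟩ := ortho_rot hlast hz0
        have hc : c ≠ 0 := by
          rintro rfl
          exact mem_nonzero hz 0 (by simp)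
        rcases hc.lt_or_gt with hneg | hpos
        · right
          have h1 : Mem (w ∘ Fin.castSucc) (patt (w ∘ Fin.castSucc) (-x₀)) ((-c) • (-x₀)) :=
            mem_smul (mem_patt hOkrotneg) (by linarith)
          rw [show (-c) • (-x₀) = c • x₀ by rw [smul_neg, neg_smul, neg_neg]] at h1
          rw [← mem_unique hz, ← mem_unique h1]
        · left
          have h1 : Mem (w ∘ Fin.castSucc) (patt (w ∘ Fin.castSucc) x₀) (c • x₀) :=
            mem_smul (mem_patt hOkrot) hpos
          rw [← mem_unique hz, ← mem_unique h1]
      · rintro (rfl | rfl)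
        · exact ⟨⟨x₀, mem_patt hOkrot⟩, x₀, mem_patt hOkrot, dd_rot g⟩
        · exact ⟨⟨-x₀, mem_patt hOkrotneg⟩, -x₀, mem_patt hOkrotneg, by rw [dd_neg, dd_rot g, neg_zero]⟩
    rw [hKd, Finset.card_insert_of_notMem (by simpa using patt_neg_ne hOkrot),
      Finset.card_singleton]
    ring
lemma dd_add_left (x y z : Fin N → ℝ) : dd (x + y) z = dd x z + dd y z := by
  simp [dd, add_mul, Finset.sum_add_distrib]

lemma dd_zero_left (x : Fin N → ℝ) : dd 0 x = 0 := by simp [dd]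

lemma dd_self_eq_zero {x : Fin N → ℝ} (h : dd x x = 0) : x = 0 := by
  by_contra hx
  exact (dd_self_pos hx).ne' h

def cr (a b : Fin 3 → ℝ) : Fin 3 → ℝ :=
  ![a 1 * b 2 - a 2 * b 1, a 2 * b 0 - a 0 * b 2, a 0 * b 1 - a 1 * b 0]

lemma dd_cr_left (a b : Fin 3 → ℝ) : dd a (cr a b) = 0 := by
  simp [dd, cr, Fin.sum_univ_three]; ring

lemma dd_cr_right (a b : Fin 3 → ℝ) : dd b (cr a b) = 0 := by
  simp [dd, cr, Fin.sum_univ_three]; ring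

lemma three_nonzero {g : Fin 3 → ℝ} (hg : g ≠ 0) : g 0 ≠ 0 ∨ g 1 ≠ 0 ∨ g 2 ≠ 0 := by
  by_contra h
  push_neg at h
  exact hg (by funext i; fin_cases i <;> simp [h.1, h.2.1, h.2.2])

lemma prop_of_cr_eq_zero {a b : Fin 3 → ℝ} (hb : b ≠ 0) (h : cr a b = 0) :
    ∃ c : ℝ, a = c • b := by
  have h0 : a 1 * b 2 - a 2 * b 1 = 0 := by simpa [cr] using congrFun h 0
  have h1 : a 2 * b 0 - a 0 * b 2 = 0 := by simpa [cr] using congrFun h 1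
  have h2 : a 0 * b 1 - a 1 * b 0 = 0 := by simpa [cr] using congrFun h 2
  rcases three_nonzero hb with hb0 | hb1 | hb2
  · exact ⟨a 0 / b 0, by funext i; fin_cases i <;> simp <;> field_simp <;> nlinarith⟩
  · exact ⟨a 1 / b 1, by funext i; fin_cases i <;> simp <;> field_simp <;> nlinarith⟩
  · exact ⟨a 2 / b 2, by funext i; fin_cases i <;> simp <;> field_simp <;> nlinarith⟩

lemma sub_span {g u : Fin 3 → ℝ} (hg : g ≠ 0) (h : ∀ z, dd g z = 0 → dd u z = 0) :
    ∃ c : ℝ, u = c • g := by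
  set u' := dd g g • u - dd g u • g with hu'
  have hgu' : dd g u' = 0 := by
    rw [hu', dd_sub, dd_smul, dd_smul]; ring
  have huu' : dd u u' = 0 := h u' hgu'
  have hself : dd u' u' = 0 := by
    rw [hu', dd_sub_left, dd_smul_left, dd_smul_left, huu', hgu']; ring
  have h0 : dd g g • u - dd g u • g = 0 := by rw [← hu']; exact dd_self_eq_zero hself
  have h1 : dd g g • u = dd g u • g := sub_eq_zero.1 h0
  have hgg : dd g g ≠ 0 := (dd_self_pos hg).ne'
  refine ⟨dd g u / dd g g, ?_⟩
  calc u = (dd g g)⁻¹ • (dd g g • u) := by rw [smul_smul, inv_mul_cancel₀ hgg, one_smul]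
    _ = (dd g g)⁻¹ • (dd g u • g) := by rw [h1]
    _ = (dd g u / dd g g) • g := by rw [smul_smul, div_eq_inv_mul, mul_comm]

lemma ker_basis (g : Fin 3 → ℝ) (hg : g ≠ 0) :
    ∃ b : Fin 2 → (Fin 3 → ℝ), (∀ l, dd g (b l) = 0) ∧
      ∀ z, dd g z = 0 → ∃ y : Fin 2 → ℝ, z = y 0 • b 0 + y 1 • b 1 := by
  rcases three_nonzero hg with h | h | h
  · refine ⟨![![-(g 1), g 0, 0], ![-(g 2), 0, g 0]], ?_, ?_⟩
    · intro l; fin_cases l <;> · simp [dd, Fin.sum_univ_three]; ring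
    · intro z hz
      have hz' : g 0 * z 0 + g 1 * z 1 + g 2 * z 2 = 0 := by
        simpa [dd, Fin.sum_univ_three] using hz
      refine ⟨![z 1 / g 0, z 2 / g 0], ?_⟩
      funext i; fin_cases i <;> simp <;> field_simp <;> linear_combination hz'
  · refine ⟨![![g 1, -(g 0), 0], ![0, -(g 2), g 1]], ?_, ?_⟩
    · intro l; fin_cases l <;> · simp [dd, Fin.sum_univ_three]; ring
    · intro z hz
      have hz' : g 0 * z 0 + g 1 * z 1 + g 2 * z 2 = 0 := by
        simpa [dd, Fin.sum_univ_three] using hz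
      refine ⟨![z 0 / g 1, z 2 / g 1], ?_⟩
      funext i; fin_cases i <;> simp <;> field_simp <;> linear_combination hz'
  · refine ⟨![![g 2, 0, -(g 0)], ![0, g 2, -(g 1)]], ?_, ?_⟩
    · intro l; fin_cases l <;> · simp [dd, Fin.sum_univ_three]; ring
    · intro z hz
      have hz' : g 0 * z 0 + g 1 * z 1 + g 2 * z 2 = 0 := by
        simpa [dd, Fin.sum_univ_three] using hz
      refine ⟨![z 0 / g 2, z 1 / g 2], ?_⟩
      funext i; fin_cases i <;> simp <;> field_simp <;> linear_combination hz'

lemma count3 : ∀ (m : ℕ) (v : Fin (m+1) → Fin 3 → ℝ), (∀ i, v i ≠ 0) →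
    (∀ i j, i ≠ j → ∀ c : ℝ, v i ≠ c • v j) →
    (∀ i j l : Fin (m+1), i ≠ j → j ≠ l → i ≠ l → ∀ z : Fin 3 → ℝ,
       dd (v i) z = 0 → dd (v j) z = 0 → dd (v l) z = 0 → z = 0) →
    (univ.filter (Realz v)).card = m * (m+1) + 2 := by
  intro m
  induction m with
  | zero => intro v hv _ _; simpa using count_one v hv
  | succ m ih =>
    intro v hv hprop htriple
    have hlast : v (Fin.last (m+1)) ≠ 0 := hv _
    rw [step_count v hlast]
    have hv'0 : ∀ i, (v ∘ Fin.castSucc) i ≠ 0 := fun i => hv _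
    have hcs : ∀ i : Fin (m+1), Fin.castSucc i ≠ Fin.last (m+1) :=
      fun i => Fin.ne_last_of_lt (Fin.castSucc_lt_last i)
    have hprop' : ∀ i j, i ≠ j → ∀ c : ℝ, (v ∘ Fin.castSucc) i ≠ c • (v ∘ Fin.castSucc) j :=
      fun i j hij c => hprop _ _ (fun h => hij (Fin.castSucc_injective _ h)) c
    have htriple' : ∀ i j l : Fin (m+1), i ≠ j → j ≠ l → i ≠ l → ∀ z : Fin 3 → ℝ,
        dd ((v ∘ Fin.castSucc) i) z = 0 → dd ((v ∘ Fin.castSucc) j) z = 0 →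
        dd ((v ∘ Fin.castSucc) l) z = 0 → z = 0 :=
      fun i j l hij hjl hil =>
        htriple _ _ _ (fun h => hij (Fin.castSucc_injective _ h))
          (fun h => hjl (Fin.castSucc_injective _ h)) (fun h => hil (Fin.castSucc_injective _ h))
    rw [ih (v ∘ Fin.castSucc) hv'0 hprop' htriple']
    obtain ⟨b, hb, hspan⟩ := ker_basis (v (Fin.last (m+1))) hlast
    set w2 : Fin (m+1) → Fin 2 → ℝ :=
      fun i => ![dd ((v ∘ Fin.castSucc) i) (b 0), dd ((v ∘ Fin.castSucc) i) (b 1)] with hw2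
    have hphi : ∀ (y : Fin 2 → ℝ) (i : Fin (m+1)),
        dd ((v ∘ Fin.castSucc) i) (y 0 • b 0 + y 1 • b 1) = dd (w2 i) y := by
      intro y i
      rw [dd_add, dd_smul, dd_smul]
      simp [hw2, dd, Fin.sum_univ_two]
      ring
    have hker : ∀ y : Fin 2 → ℝ, dd (v (Fin.last (m+1))) (y 0 • b 0 + y 1 • b 1) = 0 := by
      intro y; rw [dd_add, dd_smul, dd_smul, hb 0, hb 1]; ring
    have hw2ne : ∀ i, w2 i ≠ 0 := by
      intro i h0
      have hvan : ∀ z, dd (v (Fin.last (m+1))) z = 0 → dd ((v ∘ Fin.castSucc) i) z = 0 := by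
        intro z hz
        obtain ⟨y, rfl⟩ := hspan z hz
        rw [hphi, h0, dd_zero_left]
      obtain ⟨c, hc⟩ := sub_span hlast hvan
      exact hprop (Fin.castSucc i) (Fin.last (m+1)) (hcs i) c hc
    have hw2prop : ∀ i j, i ≠ j → ∀ c : ℝ, w2 i ≠ c • w2 j := by
      intro i j hij c hc
      have hvan : ∀ z, dd (v (Fin.last (m+1))) z = 0 →
          dd ((v ∘ Fin.castSucc) i - c • (v ∘ Fin.castSucc) j) z = 0 := by
        intro z hz
        obtain ⟨y, rfl⟩ := hspan z hz
        rw [dd_sub_left, dd_smul_left, hphi, hphi, hc, dd_smul_left]; ring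
      obtain ⟨c', hc'⟩ := sub_span hlast hvan
      have hvi : (v ∘ Fin.castSucc) i = c' • v (Fin.last (m+1)) + c • (v ∘ Fin.castSucc) j :=
        eq_add_of_sub_eq hc'
      set z0 := cr ((v ∘ Fin.castSucc) j) (v (Fin.last (m+1))) with hz0def
      have hz0j : dd ((v ∘ Fin.castSucc) j) z0 = 0 := dd_cr_left _ _
      have hz0g : dd (v (Fin.last (m+1))) z0 = 0 := dd_cr_right _ _
      have hz0i : dd ((v ∘ Fin.castSucc) i) z0 = 0 := by
        rw [hvi, dd_add_left, dd_smul_left, dd_smul_left, hz0j, hz0g]; ring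
      have hz00 : z0 = 0 :=
        htriple (Fin.castSucc i) (Fin.castSucc j) (Fin.last (m+1))
          (fun h => hij (Fin.castSucc_injective _ h)) (hcs j) (hcs i) z0 hz0i hz0j hz0g
      obtain ⟨cc, hcc⟩ := prop_of_cr_eq_zero hlast hz00
      exact hprop (Fin.castSucc j) (Fin.last (m+1)) (hcs j) cc hcc
    have hKset : (univ.filter (Realz (v ∘ Fin.castSucc))).filter (Kdeg v)
        = univ.filter (Realz w2) := by
      ext δ
      simp only [Finset.mem_filter, Finset.mem_univ, true_and]
      constructor
      · rintro ⟨-, z, hz, hz0⟩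
        obtain ⟨y, rfl⟩ := hspan z hz0
        refine ⟨y, fun i => ?_⟩
        have := hz i
        rwa [hphi] at this
      · rintro ⟨y, hy⟩
        have hmemz : Mem (v ∘ Fin.castSucc) δ (y 0 • b 0 + y 1 • b 1) := by
          intro i; rw [hphi]; exact hy i
        exact ⟨⟨_, hmemz⟩, _, hmemz, hker y⟩
    rw [hKset, count2 m w2 hw2ne hw2prop]
    ring
lemma card_components_of_partition {X : Type*} [TopologicalSpace X] {ι : Type*} (U : ι → Set X)
    (hopen : ∀ i, IsOpen (U i)) (hconn : ∀ i, IsConnected (U i))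
    (hdisj : ∀ i j, i ≠ j → ∀ x, x ∈ U i → x ∉ U j)
    (hcover : ∀ x, ∃ i, x ∈ U i) :
    Nat.card (ConnectedComponents X) = Nat.card ι := by
  have hclopen : ∀ i, IsClopen (U i) := by
    intro i
    refine ⟨?_, hopen i⟩
    have hcompl : (U i)ᶜ = ⋃ j ∈ {j | j ≠ i}, U j := by
      ext x
      simp only [Set.mem_compl_iff, Set.mem_iUnion, Set.mem_setOf_eq]
      constructor
      · intro hx
        obtain ⟨j, hj⟩ := hcover x
        exact ⟨j, fun h => hx (h ▸ hj), hj⟩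
      · rintro ⟨j, hji, hj⟩ hx
        exact hdisj j i hji x hj hx
    rw [← isOpen_compl_iff, hcompl]
    exact isOpen_biUnion fun j _ => hopen j
  have hcomp : ∀ i, ∀ x ∈ U i, connectedComponent x = U i := by
    intro i x hx
    exact Set.Subset.antisymm ((hclopen i).connectedComponent_subset hx)
      ((hconn i).isPreconnected.subset_connectedComponent hx)
  have hbij : Function.Bijective
      (fun i : ι => ((hconn i).nonempty.some : X) : ι → ConnectedComponents X) := by
    constructor
    · intro i j hij
      simp only [ConnectedComponents.coe_eq_coe] at hij
      by_contra hne
      rw [hcomp i _ (hconn i).nonempty.some_mem, hcomp j _ (hconn j).nonempty.some_mem] at hij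
      exact hdisj i j hne _ (hconn i).nonempty.some_mem
        (hij ▸ (hconn i).nonempty.some_mem)
    · intro c
      obtain ⟨x, rfl⟩ := ConnectedComponents.surjective_coe c
      obtain ⟨i, hi⟩ := hcover x
      refine ⟨i, ?_⟩
      rw [ConnectedComponents.coe_eq_coe, hcomp i _ (hconn i).nonempty.some_mem, hcomp i x hi]
  exact (Nat.card_eq_of_bijective _ hbij).symm

lemma card_components_of_connected {X : Type*} [TopologicalSpace X] [ConnectedSpace X] :
    Nat.card (ConnectedComponents X) = 1 := by
  rw [Nat.card_eq_one_iff_unique]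
  constructor
  · constructor
    intro a b
    obtain ⟨x, rfl⟩ := ConnectedComponents.surjective_coe a
    obtain ⟨y, rfl⟩ := ConnectedComponents.surjective_coe b
    rw [ConnectedComponents.coe_eq_coe, PreconnectedSpace.connectedComponent_eq_univ,
      PreconnectedSpace.connectedComponent_eq_univ]
  · obtain ⟨x⟩ := (inferInstance : Nonempty X)
    exact ⟨(x : ConnectedComponents X)⟩
/-! ### RP2 bridge -/

abbrev NZ3 := { x : Fin 3 → ℝ // x ≠ 0 }

noncomputable def qm (x : NZ3) : RP2 := Projectivization.mk ℝ x.1 x.2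

lemma qm_quot : qm = @Quotient.mk' NZ3 (projectivizationSetoid ℝ (Fin 3 → ℝ)) := rfl

lemma cont_qm : Continuous qm := by
  rw [qm_quot]; exact continuous_quotient_mk'

lemma isQM_qm : Topology.IsQuotientMap qm := by
  rw [qm_quot]; exact isQuotientMap_quotient_mk'

lemma surj_qm : Function.Surjective qm := fun p =>
  ⟨⟨p.rep, p.rep_nonzero⟩, p.mk_rep⟩

lemma rep_qm (x : NZ3) : ∃ c : ℝ, c ≠ 0 ∧ (qm x).rep = c • x.1 := by
  obtain ⟨a, ha⟩ := Projectivization.exists_smul_eq_mk_rep ℝ x.1 x.2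
  refine ⟨(a : ℝ), a.ne_zero, ?_⟩
  rw [Units.smul_def] at ha
  exact ha.symm

lemma qm_neg (x : NZ3) (h : -x.1 ≠ 0) : qm ⟨-x.1, h⟩ = qm x := by
  apply (Projectivization.mk_eq_mk_iff ℝ _ _ _ _).2
  exact ⟨-1, by simp⟩

lemma mem_projLine_iff (u : Fin 3 → ℝ) (x : NZ3) : qm x ∈ projLine u ↔ dd u x.1 = 0 := by
  obtain ⟨c, hc, hrep⟩ := rep_qm x
  have : qm x ∈ projLine u ↔ dd u ((qm x).rep) = 0 := Iff.rfl
  rw [this, hrep, dd_smul, mul_eq_zero]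
  simp [hc]

/-- sign conditions as sets -/
lemma isOpen_memset {m : ℕ} (v : Fin m → Fin 3 → ℝ) (ε : Fin m → Bool) :
    IsOpen {x : Fin 3 → ℝ | Mem v ε x} := by
  have : {x : Fin 3 → ℝ | Mem v ε x}
      = ⋂ i, {x | if ε i = true then 0 < dd (v i) x else dd (v i) x < 0} := by
    ext x; simp [Mem, Set.mem_iInter]
  rw [this]
  refine isOpen_iInter_of_finite fun i => ?_
  by_cases hi : ε i = true
  · simpa [hi] using isOpen_lt continuous_const (dd_cont (v i))
  · simpa [hi] using isOpen_lt (dd_cont (v i)) continuous_const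

lemma convex_memset {m : ℕ} (v : Fin m → Fin 3 → ℝ) (ε : Fin m → Bool) :
    Convex ℝ {x : Fin 3 → ℝ | Mem v ε x} := by
  have : {x : Fin 3 → ℝ | Mem v ε x}
      = ⋂ i, {x | if ε i = true then 0 < dd (v i) x else dd (v i) x < 0} := by
    ext x; simp [Mem, Set.mem_iInter]
  rw [this]
  refine convex_iInter fun i => ?_
  by_cases hi : ε i = true
  · simpa [hi] using convex_halfSpace_gt (dd_islin (v i)) 0
  · simpa [hi] using convex_halfSpace_lt (dd_islin (v i)) 0

lemma mem_smul_iff {m : ℕ} {v : Fin m → Fin 3 → ℝ} {ε : Fin m → Bool} {x : Fin 3 → ℝ}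
    {c : ℝ} (hc : 0 < c) : Mem v ε (c • x) ↔ Mem v ε x := by
  constructor
  · intro h
    have := mem_smul h (inv_pos.2 hc)
    rwa [smul_smul, inv_mul_cancel₀ hc.ne', one_smul] at this
  · exact fun h => mem_smul h hc

lemma mem_neg_iff {m : ℕ} {v : Fin m → Fin 3 → ℝ} {ε : Fin m → Bool} {x : Fin 3 → ℝ} :
    Mem v ε (-x) ↔ Mem v (nneg ε) x := by
  constructor
  · intro h
    have := mem_neg h
    rwa [neg_neg] at this
  · intro h
    have := mem_neg h
    rwa [nneg_nneg] at this

def Uset {m : ℕ} (v : Fin m → Fin 3 → ℝ) (ε : Fin m → Bool) : Set RP2 :=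
  {p | Mem v ε p.rep ∨ Mem v (nneg ε) p.rep}

lemma mem_or_iff_smul {m : ℕ} {v : Fin m → Fin 3 → ℝ} {ε : Fin m → Bool} {x : Fin 3 → ℝ}
    {c : ℝ} (hc : c ≠ 0) :
    (Mem v ε (c • x) ∨ Mem v (nneg ε) (c • x)) ↔ (Mem v ε x ∨ Mem v (nneg ε) x) := by
  rcases hc.lt_or_gt with h | h
  · have he : c • x = (-c) • (-x) := by rw [smul_neg, neg_smul, neg_neg]
    rw [he, mem_smul_iff (by linarith), mem_smul_iff (by linarith), mem_neg_iff, mem_neg_iff,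
      nneg_nneg, or_comm]
  · rw [mem_smul_iff h, mem_smul_iff h]

lemma mem_Uset_qm {m : ℕ} {v : Fin m → Fin 3 → ℝ} {ε : Fin m → Bool} (x : NZ3) :
    qm x ∈ Uset v ε ↔ (Mem v ε x.1 ∨ Mem v (nneg ε) x.1) := by
  obtain ⟨c, hc, hrep⟩ := rep_qm x
  have h0 : qm x ∈ Uset v ε ↔ (Mem v ε ((qm x).rep) ∨ Mem v (nneg ε) ((qm x).rep)) := Iff.rfl
  rw [h0, hrep, mem_or_iff_smul hc]

lemma isOpen_Uset {m : ℕ} (v : Fin m → Fin 3 → ℝ) (ε : Fin m → Bool) :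
    IsOpen (Uset v ε) := by
  rw [← isQM_qm.isOpen_preimage]
  have hpre : qm ⁻¹' (Uset v ε)
      = Subtype.val ⁻¹' ({x | Mem v ε x} ∪ {x | Mem v (nneg ε) x}) := by
    ext x
    simpa [Set.mem_preimage, Set.mem_union] using mem_Uset_qm x
  rw [hpre]
  exact (IsOpen.union (isOpen_memset v ε) (isOpen_memset v (nneg ε))).preimage
    continuous_subtype_val

lemma Uset_subset_compl {m : ℕ} {v : Fin m → Fin 3 → ℝ} {ε : Fin m → Bool} :
    Uset v ε ⊆ (⋃ i, projLine (v i))ᶜ := by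
  intro p hp
  simp only [Set.mem_compl_iff, Set.mem_iUnion, not_exists]
  intro i hi
  have hrep : dd (v i) p.rep = 0 := hi
  rcases hp with h | h
  · exact mem_ok h i hrep
  · exact mem_ok h i hrep

lemma isConnected_Uset {m : ℕ} (v : Fin m → Fin 3 → ℝ) (ε : Fin m → Bool) (hm : 0 < m)
    (hre : Realz v ε) : IsConnected (Uset v ε) := by
  set C := {x : Fin 3 → ℝ | Mem v ε x} with hC
  have hCne : C.Nonempty := hre
  have hCconn : IsConnected C := (convex_memset v ε).isConnected hCne
  have hCnz : ∀ x ∈ C, x ≠ 0 := fun x hx => mem_nonzero hx ⟨0, hm⟩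
  haveI : ConnectedSpace C := Subtype.connectedSpace hCconn
  set G : C → RP2 := fun x => qm ⟨x.1, hCnz x.1 x.2⟩ with hG
  have hGcont : Continuous G := cont_qm.comp (continuous_subtype_val.subtype_mk _)
  have hrange : Set.range G = Uset v ε := by
    ext p
    constructor
    · rintro ⟨x, rfl⟩
      exact (mem_Uset_qm _).2 (Or.inl x.2)
    · intro hp
      rcases hp with h | h
      · exact ⟨⟨p.rep, h⟩, p.mk_rep⟩
      · have hmem : Mem v ε (-p.rep) := mem_neg_iff.2 h
        refine ⟨⟨-p.rep, hmem⟩, ?_⟩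
        show qm ⟨-p.rep, _⟩ = p
        rw [qm_neg ⟨p.rep, p.rep_nonzero⟩ (neg_ne_zero.2 p.rep_nonzero)]
        exact p.mk_rep
  rw [← hrange]
  exact isConnected_range hGcont

lemma mem_Uset_def {m : ℕ} {v : Fin m → Fin 3 → ℝ} {ε : Fin m → Bool} {p : RP2} :
    p ∈ Uset v ε ↔ (Mem v ε p.rep ∨ Mem v (nneg ε) p.rep) := Iff.rfl

lemma projLine_smul {c : ℝ} (hc : c ≠ 0) (u : Fin 3 → ℝ) : projLine (c • u) = projLine u := by
  ext p
  show dd (c • u) p.rep = 0 ↔ dd u p.rep = 0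
  rw [dd_smul_left, mul_eq_zero]
  simp [hc]

lemma connectedSpace_RP2 : ConnectedSpace RP2 := by
  have hrank : 1 < Module.rank ℝ (Fin 3 → ℝ) := by
    rw [rank_fun']
    norm_num
  have h1 : IsConnected ({(0 : Fin 3 → ℝ)}ᶜ) :=
    isConnected_compl_singleton_of_one_lt_rank hrank 0
  haveI : ConnectedSpace NZ3 := by
    have h2 : IsConnected {x : Fin 3 → ℝ | x ≠ 0} := by
      have hset : {x : Fin 3 → ℝ | x ≠ 0} = ({(0 : Fin 3 → ℝ)}ᶜ : Set _) := by
        ext x; simp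
      rw [hset]
      exact h1
    exact Subtype.connectedSpace h2
  rw [connectedSpace_iff_univ]
  have h3 : (Set.univ : Set RP2) = Set.range qm := surj_qm.range_eq.symm
  rw [h3]
  exact isConnected_range cont_qm

end Arr

/-- An arrangement of `m` lines in general position in the real
projective plane (no two lines coincide, no point lies on three of the lines)
divides the plane into `binom(m,2) + 1` connected regions: the complement of
the union of the lines has exactly `m.choose 2 + 1` connected components. -/
theorem components_of_general_position_line_arrangement
    (m : ℕ) (v : Fin m → (Fin 3 → ℝ)) (hv : ∀ i, v i ≠ 0)
    (hdistinct : ∀ i j : Fin m, i ≠ j → projLine (v i) ≠ projLine (v j))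
    (hgen : ∀ (i j k : Fin m), i ≠ j → j ≠ k → i ≠ k →
      projLine (v i) ∩ projLine (v j) ∩ projLine (v k) = ∅) :
    Nat.card (ConnectedComponents ((⋃ i, projLine (v i))ᶜ : Set RP2)) =
      m.choose 2 + 1 := by
  classical
  cases m with
  | zero =>
    have hU : (⋃ i : Fin 0, projLine (v i)) = (∅ : Set RP2) := by simp
    rw [hU, Set.compl_empty]
    haveI := Arr.connectedSpace_RP2
    haveI : ConnectedSpace (Set.univ : Set RP2) := Subtype.connectedSpace isConnected_univ
    rw [Arr.card_components_of_connected]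
    rfl
  | succ m' =>
    -- translate the hypotheses into linear-algebra form
    have hprop : ∀ i j, i ≠ j → ∀ c : ℝ, v i ≠ c • v j := by
      intro i j hij c hc
      have hc0 : c ≠ 0 := by
        rintro rfl
        rw [zero_smul] at hc
        exact hv i hc
      exact hdistinct i j hij (by rw [hc, Arr.projLine_smul hc0])
    have htri : ∀ i j l, i ≠ j → j ≠ l → i ≠ l → ∀ z : Fin 3 → ℝ,
        Arr.dd (v i) z = 0 → Arr.dd (v j) z = 0 → Arr.dd (v l) z = 0 → z = 0 := by
      intro i j l hij hjl hil z h1 h2 h3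
      by_contra hz
      have hp : Arr.qm ⟨z, hz⟩ ∈ projLine (v i) ∩ projLine (v j) ∩ projLine (v l) :=
        ⟨⟨(Arr.mem_projLine_iff _ _).2 h1, (Arr.mem_projLine_iff _ _).2 h2⟩,
          (Arr.mem_projLine_iff _ _).2 h3⟩
      rw [hgen i j l hij hjl hil] at hp
      exact hp
    -- the partition of the complement
    set X := ((⋃ i, projLine (v i))ᶜ : Set RP2) with hX
    set ι := {ε : Fin (m'+1) → Bool // Arr.Realz v ε ∧ ε 0 = true} with hι
    set U : ι → Set X := fun ε => Subtype.val ⁻¹' (Arr.Uset v ε.1) with hU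
    have hUopen : ∀ ε : ι, IsOpen (U ε) := fun ε =>
      (Arr.isOpen_Uset v ε.1).preimage continuous_subtype_val
    have hUconn : ∀ ε : ι, IsConnected (U ε) := by
      intro ε
      have hconn := Arr.isConnected_Uset v ε.1 (Nat.succ_pos m') ε.2.1
      have hsub : Arr.Uset v ε.1 ⊆ X := Arr.Uset_subset_compl
      constructor
      · obtain ⟨p, hp⟩ := hconn.nonempty
        exact ⟨⟨p, hsub hp⟩, hp⟩
      · apply Topology.IsInducing.subtypeVal.isPreconnected_image.1
        have himg : Subtype.val '' (Subtype.val ⁻¹' Arr.Uset v ε.1 : Set X) = Arr.Uset v ε.1 :=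
          Set.image_preimage_eq_of_subset (by rw [Subtype.range_coe]; exact hsub)
        rw [himg]
        exact hconn.isPreconnected
    have hUdisj : ∀ (a b : ι), a ≠ b → ∀ x, x ∈ U a → x ∉ U b := by
      intro a b hab x hxa hxb
      obtain ⟨ha1, ha0⟩ := a.2
      obtain ⟨hb1, hb0⟩ := b.2
      have hne : a.1 ≠ b.1 := fun h => hab (Subtype.ext h)
      have hxa' := (Arr.mem_Uset_def).1 hxa
      have hxb' := (Arr.mem_Uset_def).1 hxb
      rcases hxa' with h1 | h1 <;> rcases hxb' with h2 | h2
      · exact hne ((Arr.mem_unique h1).symm.trans (Arr.mem_unique h2))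
      · have h := (Arr.mem_unique h1).symm.trans (Arr.mem_unique h2)
        have h0 := congrFun h 0
        rw [ha0] at h0
        simp [Arr.nneg, hb0] at h0
      · have h := (Arr.mem_unique h1).symm.trans (Arr.mem_unique h2)
        have h0 := congrFun h 0
        rw [hb0] at h0
        simp [Arr.nneg, ha0] at h0
      · have h := (Arr.mem_unique h1).symm.trans (Arr.mem_unique h2)
        have h' := congrArg Arr.nneg h
        rw [Arr.nneg_nneg, Arr.nneg_nneg] at h'
        exact hne h'
    have hUcover : ∀ x : X, ∃ ε : ι, x ∈ U ε := by
      intro x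
      have hok : Arr.Ok v (x.1.rep) := by
        intro i h0
        have hx2 : x.1 ∈ (⋃ i, projLine (v i))ᶜ := x.2
        simp only [Set.mem_compl_iff, Set.mem_iUnion, not_exists] at hx2
        exact hx2 i h0
      have hmemδ : Arr.Mem v (Arr.patt v x.1.rep) x.1.rep := Arr.mem_patt hok
      by_cases h0 : Arr.patt v x.1.rep 0 = true
      · exact ⟨⟨Arr.patt v x.1.rep, ⟨x.1.rep, hmemδ⟩, h0⟩, Or.inl hmemδ⟩
      · refine ⟨⟨Arr.nneg (Arr.patt v x.1.rep), ⟨-x.1.rep, Arr.mem_neg hmemδ⟩, ?_⟩,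
          Or.inr (by rw [Arr.nneg_nneg]; exact hmemδ)⟩
        simp [Arr.nneg, h0]
    have hcard := Arr.card_components_of_partition U hUopen hUconn hUdisj hUcover
    rw [hcard]
    -- count the index set
    have hc3 := Arr.count3 m' v hv hprop htri
    have hι2 : Nat.card ι
        = ((univ.filter (Arr.Realz v)).filter (fun ε => ε 0 = true)).card := by
      rw [Nat.card_eq_fintype_card, Fintype.card_subtype, Finset.filter_filter]
    have hTF : ((univ.filter (Arr.Realz v)).filter (fun ε => ε 0 = true)).card
        = ((univ.filter (Arr.Realz v)).filter (fun ε => ¬ (ε 0 = true))).card := by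
      refine Finset.card_bij' (fun ε _ => Arr.nneg ε) (fun ε _ => Arr.nneg ε) ?_ ?_ ?_ ?_
      · intro ε hε
        simp only [Finset.mem_filter, Finset.mem_univ, true_and] at hε ⊢
        obtain ⟨⟨x, hx⟩, h0⟩ := hε
        refine ⟨⟨-x, Arr.mem_neg hx⟩, ?_⟩
        simp [Arr.nneg, h0]
      · intro ε hε
        simp only [Finset.mem_filter, Finset.mem_univ, true_and] at hε ⊢
        obtain ⟨⟨x, hx⟩, h0⟩ := hε
        refine ⟨⟨-x, Arr.mem_neg hx⟩, ?_⟩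
        simp only [Bool.not_eq_true] at h0
        simp [Arr.nneg, h0]
      · intro ε _; exact Arr.nneg_nneg ε
      · intro ε _; exact Arr.nneg_nneg ε
    have hsplit := Finset.card_filter_add_card_filter_not
      (s := univ.filter (Arr.Realz v)) (p := fun ε => ε 0 = true)
    have hdvd : 2 ∣ (m'+1) * m' := by
      have he := Nat.even_mul_succ_self m'
      exact (by rwa [mul_comm] at he : Even ((m'+1) * m')).two_dvd
    have hq : 2 * ((m'+1).choose 2) = m' * (m'+1) := by
      rw [Nat.choose_two_right, Nat.succ_sub_one, Nat.mul_div_cancel' hdvd, mul_comm]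
    rw [hι2]
    set T := ((univ.filter (Arr.Realz v)).filter (fun ε => ε 0 = true)).card with hT
    set F := ((univ.filter (Arr.Realz v)).filter (fun ε => ¬ (ε 0 = true))).card with hF
    set A := (univ.filter (Arr.Realz v)).card with hA
    clear_value T F A
    clear hT hF hA hι2 hcard hUopen hUconn hUdisj hUcover hU hι hX hprop htri hdistinct hgen hv U
    omega
end

section
/- The Robinson polynomial R(1,3,-1) is nonnegative on all of R^3. -/
/-- Schur's inequality (t = 1) for nonnegative reals. -/
lemma schur_aux (a b c : ℝ) (ha : 0 ≤ a) (hb : 0 ≤ b) (hc : 0 ≤ c) :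
    0 ≤ a^3 + b^3 + c^3 + 3*a*b*c - (a^2*b + a^2*c + a*b^2 + a*c^2 + b^2*c + b*c^2) := by
  rcases le_total a b with h1 | h1 <;> rcases le_total b c with h2 | h2 <;>
    rcases le_total a c with h3 | h3 <;>
    nlinarith [mul_nonneg (mul_nonneg ha hb) hc, sq_nonneg (a-b), sq_nonneg (b-c), sq_nonneg (a-c),
      mul_nonneg ha (sq_nonneg (b-c)), mul_nonneg hb (sq_nonneg (a-c)), mul_nonneg hc (sq_nonneg (a-b))]

/-- The Robinson polynomial `R(1,3,-1)` as a function on `ℝ³`. -/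
def robinson (x y z : ℝ) : ℝ :=
  x^6 + y^6 + z^6 + 3*x^2*y^2*z^2
    - (x^4*y^2 + x^4*z^2 + x^2*y^4 + x^2*z^4 + y^4*z^2 + y^2*z^4)

/-- the Robinson polynomial `R(1,3,-1)` is nonnegative on `ℝ³`. -/
theorem robinson_nonneg (x y z : ℝ) : 0 ≤ robinson x y z := by
  have := schur_aux (x^2) (y^2) (z^2) (sq_nonneg x) (sq_nonneg y) (sq_nonneg z)
  unfold robinson
  nlinarith [this]
end
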